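/- Let m ≥ 3 be an integer and let Z be the center of the dihedral Artin group G(m). If g ∈ G(m) with g ∉ Z, and z ∈ Z with z ≠ 1, then g and gz are not conjugate in G(m). -/

import Mathlib

/-- The alternating product `xyxy⋯` with `m` factors, starting with `x`. -/
def altProd {G : Type*} [Monoid G] : ℕ → G → G → G
  | 0, _, _ => 1
  | m + 1, x, y => x * altProd m y x

/-- The Artin relators associated to a Coxeter matrix `M` (with entries in `ℕ∞`):
for each pair `i ≠ j` with `M i j = m` finite, the relator `ₘ(xᵢ,xⱼ) ₘ(xⱼ,xᵢ)⁻¹`. -/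
def artinRels {n : ℕ} (M : Fin n → Fin n → ℕ∞) : Set (FreeGroup (Fin n)) :=
  { r | ∃ (i j : Fin n) (m : ℕ), i ≠ j ∧ M i j = (m : ℕ∞) ∧
        r = altProd m (FreeGroup.of i) (FreeGroup.of j) *
            (altProd m (FreeGroup.of j) (FreeGroup.of i))⁻¹ }

/-- The Artin group defined by the Coxeter matrix `M`. -/
abbrev ArtinGroup {n : ℕ} (M : Fin n → Fin n → ℕ∞) : Type := PresentedGroup (artinRels M)

/-- The standard generators of the Artin group. -/
def agen {n : ℕ} (M : Fin n → Fin n → ℕ∞) (i : Fin n) : ArtinGroup M :=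
  PresentedGroup.of i

/-- `M` is a Coxeter matrix of extra-large type: symmetric, `1` on the diagonal,
and all off-diagonal entries at least `4` (possibly `∞`). -/
structure IsXLMatrix {n : ℕ} (M : Fin n → Fin n → ℕ∞) : Prop where
  symm : ∀ i j, M i j = M j i
  diag : ∀ i, M i i = 1
  large : ∀ i j, i ≠ j → 4 ≤ M i j

/-- `M` is a Coxeter matrix of large type: symmetric, `1` on the diagonal,
and all off-diagonal entries at least `3` (possibly `∞`). -/
structure IsLargeMatrix {n : ℕ} (M : Fin n → Fin n → ℕ∞) : Prop where
  symm : ∀ i j, M i j = M j i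
  diag : ∀ i, M i i = 1
  large : ∀ i j, i ≠ j → 3 ≤ M i j

/-- The element of a group represented by a word over `X ∪ X⁻¹`, where a word is a list
of pairs `(i, ε)` with `ε = true` for the generator `x i` and `ε = false` for its inverse. -/
def wordProd {G : Type*} [Group G] {α : Type*} (x : α → G) (w : List (α × Bool)) : G :=
  (w.map fun p => if p.2 then x p.1 else (x p.1)⁻¹).prod

/-- The length `|g|` of `g`: the minimal length of a word over `X ∪ X⁻¹` representing `g`. -/
noncomputable def wlen {G : Type*} [Group G] {α : Type*} (x : α → G) (g : G) : ℕ :=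
  sInf { k | ∃ w : List (α × Bool), w.length = k ∧ wordProd x w = g }

/-- A word is geodesic if its length equals the length of the element it represents. -/
def IsGeodesicWord {G : Type*} [Group G] {α : Type*} (x : α → G) (w : List (α × Bool)) :
    Prop :=
  w.length = wlen x (wordProd x w)

/-- An element `g` is cyclically reduced if `|a g a⁻¹| ≥ |g|` for every letter
`a ∈ X ∪ X⁻¹`. -/
def CyclicallyReduced {G : Type*} [Group G] {α : Type*} (x : α → G) (g : G) : Prop :=
  ∀ p : α × Bool, wlen x g ≤ wlen x (wordProd x [p] * g * (wordProd x [p])⁻¹)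

/-- `d` is a left divisor of `g`: `|d| + |d⁻¹g| = |g|`. -/
def IsLeftDivisor {G : Type*} [Group G] {α : Type*} (x : α → G) (d g : G) : Prop :=
  wlen x d + wlen x (d⁻¹ * g) = wlen x g

/-- `d` is a right divisor of `g`: `|gd⁻¹| + |d| = |g|`. -/
def IsRightDivisor {G : Type*} [Group G] {α : Type*} (x : α → G) (d g : G) : Prop :=
  wlen x (g * d⁻¹) + wlen x d = wlen x g

/-- The Coxeter matrix of the dihedral Artin group `G(m)`. -/
def Mdih (m : ℕ) : Fin 2 → Fin 2 → ℕ∞ := fun i j => if i = j then 1 else (m : ℕ∞)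

/-- The dihedral Artin group `G(m) = ⟨x₁,x₂ ∣ ₘ(x₁,x₂) = ₘ(x₂,x₁)⟩`. -/
abbrev DihedralArtinGroup (m : ℕ) : Type := ArtinGroup (Mdih m)


open FreeGroup in
theorem reduce_cons_of_ne {α : Type*} [DecidableEq α] {L : List (α × Bool)} (p : α × Bool)
    (hL : reduce L = L) (h : ∀ q ∈ L.head?, q ≠ (p.1, !p.2)) :
    reduce (p :: L) = p :: L := by
  rw [FreeGroup.reduce.cons, hL]
  cases L with
  | nil => rfl
  | cons q t =>
    simp only [List.head?_cons, Option.mem_some_iff, forall_eq] at h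
    have : ¬ (p.1 = q.1 ∧ p.2 = !q.2) := by
      rintro ⟨h1, h2⟩
      exact h _ rfl (Prod.ext h1.symm (by simp [h2]))
    simp [this]

open FreeGroup in
theorem reduce_concat_of_ne {α : Type*} [DecidableEq α] {L : List (α × Bool)} (p : α × Bool)
    (hL : reduce L = L) (h : ∀ q ∈ L.getLast?, q ≠ (p.1, !p.2)) :
    reduce (L ++ [p]) = L ++ [p] := by
  have h1 : invRev (L ++ [p]) = (p.1, !p.2) :: invRev L := by
    simp [invRev]
  have h2 : reduce (invRev L) = invRev L := by
    rw [FreeGroup.reduce_invRev, hL]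
  have h3 : reduce ((p.1,!p.2) :: invRev L) = (p.1,!p.2) :: invRev L := by
    apply reduce_cons_of_ne _ h2
    intro q hq
    rcases List.eq_nil_or_concat L with rfl | ⟨t, r, rfl⟩
    · simp [invRev] at hq
    · rw [List.concat_eq_append] at hq h
      have hir : invRev (t ++ [r]) = (r.1, !r.2) :: invRev t := by simp [invRev]
      rw [hir] at hq
      simp only [List.head?_cons, Option.mem_some_iff] at hq
      subst hq
      have hr := h r (by simp)
      intro hc
      apply hr
      rw [Prod.mk.injEq] at hc
      obtain ⟨e1, e2⟩ := hc
      exact Prod.ext e1 (Bool.not_inj e2)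
  have h4 : reduce (invRev (L ++ [p])) = invRev (L ++ [p]) := by
    rw [h1]; exact h3
  rw [FreeGroup.reduce_invRev] at h4
  exact invRev_injective h4

theorem eq_of_append_singleton_eq_cons {α : Type*} :
    ∀ (L : List α) (p : α), L ++ [p] = p :: L → ∀ q ∈ L, q = p := by
  intro L p h q hq
  induction L with
  | nil => simp at hq
  | cons r t ih =>
    simp only [List.cons_append, List.cons.injEq] at h
    obtain ⟨rfl, h2⟩ := h
    rcases List.mem_cons.1 hq with rfl | hq
    · rfl
    · exact ih h2 hq

/-- An element of a free group commuting with every generator is trivial,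
provided there are at least two distinct generators. -/
theorem freeGroup_center_eq_one {α : Type*} [DecidableEq α] {i₀ j₀ : α} (hij : i₀ ≠ j₀)
    (z : FreeGroup α) (h : ∀ i, Commute (FreeGroup.of i) z) : z = 1 := by
  by_contra hz
  have hw : z.toWord ≠ [] := fun hc => hz (FreeGroup.toWord_eq_nil_iff.1 hc)
  set w := z.toWord with hwdef
  obtain ⟨⟨j, s⟩, t, hwt⟩ : ∃ p t, w = p :: t := by
    cases hcase : w with
    | nil => exact absurd hcase hw
    | cons p t => exact ⟨p, t, rfl⟩
  obtain ⟨k, hk⟩ : ∃ k, k ≠ j := by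
    rcases eq_or_ne i₀ j with rfl | hne
    · exact ⟨j₀, fun hc => hij hc.symm⟩
    · exact ⟨i₀, hne⟩
  have hred : FreeGroup.reduce w = w := z.reduce_toWord
  have key : ∀ e : Bool, FreeGroup.reduce (w ++ [(k, e)]) = (k, e) :: w := by
    intro e
    have h1 : FreeGroup.mk [(k,e)] * z = FreeGroup.mk ((k,e) :: w) := by
      conv_lhs => rw [← z.mk_toWord]
      rw [FreeGroup.mul_mk]
      rfl
    have h2 : z * FreeGroup.mk [(k,e)] = FreeGroup.mk (w ++ [(k,e)]) := by
      conv_lhs => rw [← z.mk_toWord]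
      rw [FreeGroup.mul_mk]
    have hcomm : FreeGroup.mk [(k,e)] * z = z * FreeGroup.mk [(k,e)] := by
      cases e
      · have : FreeGroup.mk [(k,false)] = (FreeGroup.of k)⁻¹ := by
          rw [FreeGroup.of, FreeGroup.inv_mk]; rfl
        rw [this]
        exact ((h k).inv_left).eq
      · exact (h k).eq
    have heq : FreeGroup.mk (w ++ [(k,e)]) = FreeGroup.mk ((k,e) :: w) := by
      rw [← h1, ← h2, hcomm]
    have hr := FreeGroup.reduce.sound heq
    rw [hr]
    apply reduce_cons_of_ne _ hred
    rw [hwt]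
    intro q hq
    simp only [List.head?_cons, Option.mem_some_iff] at hq
    subst hq
    intro hc
    exact hk (congrArg Prod.fst hc).symm
  have hlast : ∀ e : Bool, w.getLast? = some (k, !e) ∨ (∀ q ∈ w, q = ((k:α), e)) := by
    intro e
    by_cases hc : ∀ q ∈ w.getLast?, q ≠ (k, !e)
    · right
      have := reduce_concat_of_ne (L := w) (k, e) hred hc
      rw [key e] at this
      exact fun q hq => eq_of_append_singleton_eq_cons w (k,e) this.symm q hq
    · left
      push_neg at hc
      obtain ⟨q, hq1, hq2⟩ := hc
      subst hq2
      exact hq1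
  have hhead : ((j:α), s) ∈ w := by rw [hwt]; exact List.mem_cons_self
  have h1 := hlast true
  have h2 := hlast false
  rcases h1 with h1 | h1
  · rcases h2 with h2 | h2
    · rw [h1] at h2
      simp at h2
    · exact hk (congrArg Prod.fst (h2 _ hhead)).symm
  · exact hk (congrArg Prod.fst (h1 _ hhead)).symm

namespace DAG

variable (d : ℕ)

abbrev Ffr := FreeGroup (Fin (d+2))

def aa (i : ℕ) : Ffr d := FreeGroup.of ⟨i % (d+2), Nat.mod_lt _ (by omega)⟩

theorem aa_eq {i : ℕ} (h : i < d+2) : aa d i = FreeGroup.of ⟨i, h⟩ := by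
  simp [aa, Nat.mod_eq_of_lt h]

theorem of_eq_aa (v : Fin (d+2)) : FreeGroup.of v = aa d (v : ℕ) := by
  rw [aa_eq d v.2]

def EE : ℕ → Ffr d
  | 0 => 1
  | j+1 => EE j * aa d (2*j)

def OO : ℕ → Ffr d
  | 0 => 1
  | j+1 => OO j * aa d (2*j+1)

theorem EE_succ (j : ℕ) : EE d (j+1) = EE d j * aa d (2*j) := rfl
theorem OO_succ (j : ℕ) : OO d (j+1) = OO d j * aa d (2*j+1) := rfl

def kk : ℕ := (d+3)/2

def wplus : Ffr d :=
  if Even d then (EE d (kk d))⁻¹ * OO d (kk d) else (OO d (kk d - 1))⁻¹ * EE d (kk d)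

def wminus : Ffr d :=
  if Even d then EE d (kk d) * (OO d (kk d))⁻¹ else EE d (kk d) * (OO d (kk d - 1))⁻¹

def thp : Ffr d →* Ffr d :=
  FreeGroup.lift (fun v : Fin (d+2) => if (v : ℕ) = d+1 then wplus d else aa d ((v : ℕ)+1))

def thm : Ffr d →* Ffr d :=
  FreeGroup.lift (fun v : Fin (d+2) => if (v : ℕ) = 0 then wminus d else aa d ((v : ℕ)-1))

theorem thp_aa {i : ℕ} (h : i ≤ d) : thp d (aa d i) = aa d (i+1) := by
  rw [aa_eq d (by omega : i < d+2), thp, FreeGroup.lift_apply_of]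
  rw [if_neg (show ¬ (i = d+1) by omega)]

theorem thp_top : thp d (aa d (d+1)) = wplus d := by
  rw [aa_eq d (by omega : d+1 < d+2), thp, FreeGroup.lift_apply_of]
  rw [if_pos (show d+1 = d+1 from rfl)]

theorem thm_aa {i : ℕ} (h1 : 1 ≤ i) (h2 : i ≤ d+1) : thm d (aa d i) = aa d (i-1) := by
  rw [aa_eq d (by omega : i < d+2), thm, FreeGroup.lift_apply_of]
  rw [if_neg (show ¬ (i = 0) by omega)]

theorem thm_0 : thm d (aa d 0) = wminus d := by
  rw [aa_eq d (by omega : 0 < d+2), thm, FreeGroup.lift_apply_of]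
  rw [if_pos (show (0:ℕ) = 0 from rfl)]

theorem thp_EE {j : ℕ} (h : 2*j ≤ d+2) : thp d (EE d j) = OO d j := by
  induction j with
  | zero => simp [EE, OO]
  | succ j ih =>
    rw [EE_succ, OO_succ, map_mul, ih (by omega), thp_aa d (by omega)]

theorem thp_OO {j : ℕ} (h : 2*j+1 ≤ d+2) : thp d (OO d j) = (aa d 0)⁻¹ * EE d (j+1) := by
  induction j with
  | zero =>
    show thp d 1 = (aa d 0)⁻¹ * (1 * aa d 0)
    simp
  | succ j ih =>
    rw [OO_succ, map_mul, ih (by omega), thp_aa d (by omega)]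
    have h2 : 2*j+1+1 = 2*(j+1) := by omega
    rw [h2, mul_assoc, ← EE_succ]

theorem thm_OO {j : ℕ} (h : 2*j ≤ d+2) : thm d (OO d j) = EE d j := by
  induction j with
  | zero => simp [EE, OO]
  | succ j ih =>
    rw [OO_succ, map_mul, ih (by omega), thm_aa d (by omega) (by omega)]
    have h2 : 2*j+1-1 = 2*j := by omega
    rw [h2, ← EE_succ]

theorem thm_EE {j : ℕ} (h : 2*j ≤ d+1) : thm d (EE d (j+1)) = wminus d * OO d j := by
  induction j with
  | zero =>
    show thm d (1 * aa d 0) = wminus d * 1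
    rw [one_mul, mul_one, thm_0]
  | succ j ih =>
    rw [EE_succ, map_mul, ih (by omega), thm_aa d (by omega) (by omega)]
    have h2 : 2*(j+1)-1 = 2*j+1 := by omega
    rw [h2, mul_assoc, ← OO_succ]

theorem not_even_odd (e : ℕ) : ¬ Even (2*e+1) := by
  simp [Nat.even_add_one, parity_simps]

theorem thm_wplus : thm d (wplus d) = aa d (d+1) := by
  rcases Nat.even_or_odd d with ⟨e, he⟩ | ⟨e, he⟩
  · have he' : d = 2*e := by omega
    subst he'
    have hk : kk (2*e) = e+1 := by simp [kk]; omega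
    rw [wplus, if_pos ⟨e, by omega⟩, hk, map_mul, map_inv, thm_OO _ (by omega),
      thm_EE _ (by omega), wminus, if_pos ⟨e, by omega⟩, hk, OO_succ]
    group
  · subst he
    have hk : kk (2*e+1) = e+1+1 := by simp [kk]; omega
    have hk1 : e + 1 + 1 - 1 = e + 1 := by omega
    rw [wplus, if_neg (not_even_odd e), hk, hk1, map_mul, map_inv,
      thm_OO _ (by omega), thm_EE _ (by omega),
      wminus, if_neg (not_even_odd e), hk, hk1, EE_succ _ (e+1),
      show 2*e+1+1 = 2*(e+1) by omega]
    group

theorem thp_wminus : thp d (wminus d) = aa d 0 := by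
  rcases Nat.even_or_odd d with ⟨e, he⟩ | ⟨e, he⟩
  · have he' : d = 2*e := by omega
    subst he'
    have hk : kk (2*e) = e+1 := by simp [kk]; omega
    rw [wminus, if_pos ⟨e, by omega⟩, hk, map_mul, map_inv, thp_EE _ (by omega), OO_succ,
      map_mul, thp_OO _ (by omega), show (2*e+1) = (2*e)+1 from rfl, thp_top,
      wplus, if_pos ⟨e, by omega⟩, hk, OO_succ]
    group
  · subst he
    have hk : kk (2*e+1) = e+2 := by simp [kk]; omega
    have hk1 : e + 2 - 1 = e + 1 := by omega
    rw [wminus, if_neg (not_even_odd e), hk, hk1, map_mul, map_inv, thp_OO _ (by omega),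
      EE_succ, map_mul, thp_EE _ (by omega),
      show (2*(e+1)) = (2*e+1)+1 by omega, thp_top,
      wplus, if_neg (not_even_odd e), hk, hk1, EE_succ,
      show (2*(e+1)) = (2*e+1)+1 by omega]
    group

def Th : MulAut (Ffr d) :=
  MonoidHom.toMulEquiv (thp d) (thm d)
    (by
      apply FreeGroup.ext_hom
      intro v
      simp only [MonoidHom.comp_apply, MonoidHom.id_apply]
      rw [of_eq_aa]
      rcases eq_or_ne (v : ℕ) (d+1) with hv | hv
      · rw [hv, thp_top, thm_wplus]
      · have hv2 : (v:ℕ) ≤ d := by have := v.2; omega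
        rw [thp_aa d hv2, thm_aa d (by omega) (by omega)]
        congr 1)
    (by
      apply FreeGroup.ext_hom
      intro v
      simp only [MonoidHom.comp_apply, MonoidHom.id_apply]
      rw [of_eq_aa]
      rcases eq_or_ne (v : ℕ) 0 with hv | hv
      · rw [hv, thm_0, thp_wminus]
      · have hv2 : (v:ℕ) ≤ d+1 := by have := v.2; omega
        rw [thm_aa d (by omega) hv2, thp_aa d (by omega)]
        congr 1
        omega)

theorem Th_apply (v : Ffr d) : Th d v = thp d v := rfl

theorem Th_symm_apply (v : Ffr d) : (Th d).symm v = thm d v := rfl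

theorem Th_pow_aa {i j : ℕ} (h : j + i ≤ d + 1) : (Th d ^ i) (aa d j) = aa d (j+i) := by
  induction i generalizing j with
  | zero => simp
  | succ i ih =>
    rw [pow_succ', MulAut.mul_apply, ih (by omega), Th_apply, thp_aa d (by omega)]
    congr 1

end DAG
theorem altProd_add_two {G : Type*} [Monoid G] (n : ℕ) (x y : G) :
    altProd (n+2) x y = (x*y) * altProd n x y := by
  show x * altProd (n+1) y x = _
  show x * (y * altProd n x y) = _
  rw [mul_assoc]

theorem altProd_even {G : Type*} [Monoid G] (j : ℕ) (x y : G) :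
    altProd (2*j) x y = (x*y)^j := by
  induction j with
  | zero => simp [altProd]
  | succ j ih =>
    have h : 2*(j+1) = 2*j+2 := by ring
    rw [h, altProd_add_two, ih, pow_succ']

theorem altProd_odd {G : Type*} [Monoid G] (j : ℕ) (x y : G) :
    altProd (2*j+1) x y = (x*y)^j * x := by
  induction j with
  | zero => simp [altProd]
  | succ j ih =>
    have h : 2*(j+1)+1 = (2*j+1)+2 := by ring
    rw [h, altProd_add_two, ih, pow_succ']; simp [mul_assoc]

theorem map_altProd {G H : Type*} [Monoid G] [Monoid H] (f : G →* H) (n : ℕ) (x y : G) :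
    f (altProd n x y) = altProd n (f x) (f y) := by
  induction n generalizing x y with
  | zero => simp [altProd]
  | succ n ih => show f (x * altProd n y x) = _; rw [map_mul, ih]; rfl

namespace DAG

variable (d : ℕ)

def phiZ : Multiplicative ℤ →* MulAut (Ffr d) := zpowersHom _ (Th d)

abbrev K := SemidirectProduct (Ffr d) (Multiplicative ℤ) (phiZ d)

def XX : K d := SemidirectProduct.inr (Multiplicative.ofAdd 1)

def YY : K d := SemidirectProduct.inl (aa d 0) * XX d

theorem phiZ_apply (t : ℤ) : phiZ d (Multiplicative.ofAdd t) = Th d ^ t := by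
  simp [phiZ]

theorem phiZ_nat (i : ℕ) (v : Ffr d) :
    (phiZ d (Multiplicative.ofAdd (i : ℤ))) v = (Th d ^ i) v := by
  rw [phiZ_apply, zpow_natCast]

theorem XX_def : XX d = ⟨1, Multiplicative.ofAdd 1⟩ := by
  rw [XX]; rfl

theorem YY_def : YY d = ⟨aa d 0, Multiplicative.ofAdd 1⟩ := by
  rw [YY, XX, ← SemidirectProduct.mk_eq_inl_mul_inr]

theorem XY_def : XX d * YY d = ⟨aa d 1, Multiplicative.ofAdd 2⟩ := by
  rw [XX_def, YY_def, SemidirectProduct.mul_def, SemidirectProduct.ext_iff]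
  constructor
  · show 1 * (phiZ d (Multiplicative.ofAdd ((1:ℕ) : ℤ))) (aa d 0) = aa d 1
    rw [one_mul, phiZ_nat, pow_one, Th_apply, thp_aa d (by omega)]
  · rfl

theorem YX_def : YY d * XX d = ⟨aa d 0, Multiplicative.ofAdd 2⟩ := by
  rw [XX_def, YY_def, SemidirectProduct.mul_def, SemidirectProduct.ext_iff]
  constructor
  · show aa d 0 * (phiZ d (Multiplicative.ofAdd 1)) 1 = aa d 0
    rw [map_one, mul_one]
  · rfl

theorem ofAdd_nat_mul (u v : ℕ) : Multiplicative.ofAdd ((u:ℤ)) * Multiplicative.ofAdd ((v:ℤ))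
    = Multiplicative.ofAdd (((u+v:ℕ)):ℤ) := by
  rw [← ofAdd_add]
  congr 1

theorem XY_pow {j : ℕ} (h : 2*j ≤ d+2) :
    (XX d * YY d)^j = ⟨OO d j, Multiplicative.ofAdd ((2*j : ℕ) : ℤ)⟩ := by
  induction j with
  | zero => rw [pow_zero]; rfl
  | succ j ih =>
    rw [pow_succ, ih (by omega), XY_def, SemidirectProduct.mul_def,
      SemidirectProduct.ext_iff]
    constructor
    · show OO d j * (phiZ d (Multiplicative.ofAdd ((2*j:ℕ) : ℤ))) (aa d 1) = OO d (j+1)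
      rw [phiZ_nat, Th_pow_aa d (i := 2*j) (j := 1) (by omega),
        show 1+2*j = 2*j+1 by omega]
      exact (OO_succ d j).symm
    · show Multiplicative.ofAdd ((2*j:ℕ):ℤ) * Multiplicative.ofAdd ((2:ℕ):ℤ) = _
      rw [ofAdd_nat_mul]
      congr 1

theorem YX_pow {j : ℕ} (h : 2*j ≤ d+3) :
    (YY d * XX d)^j = ⟨EE d j, Multiplicative.ofAdd ((2*j : ℕ) : ℤ)⟩ := by
  induction j with
  | zero => rw [pow_zero]; rfl
  | succ j ih =>
    rw [pow_succ, ih (by omega), YX_def, SemidirectProduct.mul_def,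
      SemidirectProduct.ext_iff]
    constructor
    · show EE d j * (phiZ d (Multiplicative.ofAdd ((2*j:ℕ) : ℤ))) (aa d 0) = EE d (j+1)
      rw [phiZ_nat, Th_pow_aa d (i := 2*j) (j := 0) (by omega), Nat.zero_add]
      exact (EE_succ d j).symm
    · show Multiplicative.ofAdd ((2*j:ℕ):ℤ) * Multiplicative.ofAdd ((2:ℕ):ℤ) = _
      rw [ofAdd_nat_mul]
      congr 1

theorem braidK : altProd (d+3) (XX d) (YY d) = altProd (d+3) (YY d) (XX d) := by
  rcases Nat.even_or_odd d with ⟨e, he⟩ | ⟨e, he⟩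
  · have he' : d = 2*e := by omega
    subst he'
    have hm : 2*e+3 = 2*(e+1)+1 := by omega
    rw [hm, altProd_odd, altProd_odd,
      XY_pow _ (by omega), YX_pow _ (by omega), XX_def, YY_def,
      SemidirectProduct.mul_def, SemidirectProduct.mul_def, SemidirectProduct.ext_iff]
    constructor
    · show OO (2*e) (e+1) * (phiZ (2*e) (Multiplicative.ofAdd ((2*(e+1):ℕ):ℤ))) 1 =
        EE (2*e) (e+1) * (phiZ (2*e) (Multiplicative.ofAdd ((2*(e+1):ℕ):ℤ))) (aa (2*e) 0)
      rw [map_one, mul_one, phiZ_nat,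
        show 2*(e+1) = (2*e+1)+1 by omega, pow_succ', MulAut.mul_apply,
        Th_pow_aa _ (i := 2*e+1) (j := 0) (by omega), Nat.zero_add, Th_apply, thp_top,
        wplus, if_pos ⟨e, by omega⟩, show kk (2*e) = e+1 by simp [kk]; omega]
      group
    · show Multiplicative.ofAdd ((2*(e+1):ℕ):ℤ) * Multiplicative.ofAdd ((1:ℕ):ℤ) =
        Multiplicative.ofAdd ((2*(e+1):ℕ):ℤ) * Multiplicative.ofAdd ((1:ℕ):ℤ)
      rfl
  · subst he
    have hm : 2*e+1+3 = 2*(e+2) := by omega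
    rw [hm, altProd_even, altProd_even,
      YX_pow _ (by omega), show e+2 = (e+1)+1 from rfl, pow_succ,
      XY_pow _ (by omega), XY_def, SemidirectProduct.mul_def, SemidirectProduct.ext_iff]
    constructor
    · show OO (2*e+1) (e+1) *
        (phiZ (2*e+1) (Multiplicative.ofAdd ((2*(e+1):ℕ):ℤ))) (aa (2*e+1) 1) =
        EE (2*e+1) (e+1+1)
      rw [phiZ_nat, show 2*(e+1) = (2*e+1)+1 by omega, pow_succ', MulAut.mul_apply,
        Th_pow_aa _ (i := 2*e+1) (j := 1) (by omega), show 1+(2*e+1) = 2*e+1+1 by omega, Th_apply, thp_top,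
        wplus, if_neg (not_even_odd e), show kk (2*e+1) = e+1+1 by simp [kk]; omega,
        show e+1+1-1 = e+1 by omega]
      group
    · show Multiplicative.ofAdd ((2*(e+1):ℕ):ℤ) * Multiplicative.ofAdd ((2:ℕ):ℤ) =
        Multiplicative.ofAdd ((2*(e+1+1):ℕ):ℤ)
      rw [ofAdd_nat_mul]
      congr 1

end DAG
namespace DAG

variable (d : ℕ)

abbrev Gd := DihedralArtinGroup (d+3)

def xg : Gd d := PresentedGroup.of 0

def yg : Gd d := PresentedGroup.of 1

theorem braidG : altProd (d+3) (xg d) (yg d) = altProd (d+3) (yg d) (xg d) := by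
  have hmem : altProd (d+3) (FreeGroup.of 0) (FreeGroup.of 1) *
      (altProd (d+3) (FreeGroup.of 1) (FreeGroup.of (0 : Fin 2)))⁻¹ ∈ artinRels (Mdih (d+3)) :=
    ⟨0, 1, d+3, by decide, by simp [Mdih], rfl⟩
  have hone : PresentedGroup.mk (artinRels (Mdih (d+3)))
      (altProd (d+3) (FreeGroup.of 0) (FreeGroup.of 1) *
      (altProd (d+3) (FreeGroup.of 1) (FreeGroup.of (0 : Fin 2)))⁻¹) = 1 := by
    apply (QuotientGroup.eq_one_iff _).2
    exact Subgroup.subset_normalClosure hmem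
  rw [map_mul, map_inv, map_altProd, map_altProd] at hone
  exact mul_inv_eq_one.1 hone

theorem hrels : ∀ r ∈ artinRels (Mdih (d+3)),
    FreeGroup.lift (fun i : Fin 2 => if i = 0 then XX d else YY d) r = 1 := by
  rintro r ⟨i, j, m', hij, hM, rfl⟩
  have hm' : m' = d + 3 := by
    rw [Mdih] at hM
    rw [if_neg hij] at hM
    exact_mod_cast hM.symm
  subst hm'
  rw [map_mul, map_inv, map_altProd, map_altProd, FreeGroup.lift_apply_of, FreeGroup.lift_apply_of]
  fin_cases i <;> fin_cases j
  · exact absurd rfl hij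
  · show altProd (d+3) (XX d) (YY d) * (altProd (d+3) (YY d) (XX d))⁻¹ = 1
    rw [braidK]
    simp
  · show altProd (d+3) (YY d) (XX d) * (altProd (d+3) (XX d) (YY d))⁻¹ = 1
    rw [← braidK]
    simp
  · exact absurd rfl hij

def psi : Gd d →* K d := PresentedGroup.toGroup (hrels d)

theorem psi_x : psi d (xg d) = XX d := by
  rw [xg, psi, PresentedGroup.toGroup.of]
  rfl

theorem psi_y : psi d (yg d) = YY d := by
  rw [yg, psi, PresentedGroup.toGroup.of]
  rfl

def bG (i : ℕ) : Gd d := xg d ^ i * yg d * (xg d ^ (i+1))⁻¹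

def f1 : Ffr d →* Gd d := FreeGroup.lift (fun v : Fin (d+2) => bG d (v : ℕ))

theorem f1_aa {i : ℕ} (h : i ≤ d+1) : f1 d (aa d i) = bG d i := by
  rw [aa_eq d (by omega : i < d+2), f1, FreeGroup.lift_apply_of]

theorem bG_shift1 (i : ℕ) : bG d i * xg d ^ (i+1) = xg d ^ i * yg d := by
  rw [bG]
  group

theorem bG_shift (i : ℕ) : bG d i * xg d ^ (i+2) = xg d ^ i * (yg d * xg d) := by
  rw [bG]
  group

theorem bG_succ (i : ℕ) : bG d (i+1) = xg d * bG d i * (xg d)⁻¹ := by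
  rw [bG, bG]
  group

theorem f1_EE {j : ℕ} (h : 2*j ≤ d+3) :
    f1 d (EE d j) * xg d ^ (2*j) = (yg d * xg d)^j := by
  induction j with
  | zero => show f1 d 1 * xg d ^ 0 = 1; simp
  | succ j ih =>
    rw [EE_succ, map_mul, f1_aa _ (by omega), show 2*(j+1) = 2*j+2 by omega,
      mul_assoc, bG_shift, ← mul_assoc, ← mul_assoc, ih (by omega), pow_succ]
    rw [mul_assoc]

theorem f1_OO {j : ℕ} (h : 2*j ≤ d+2) :
    f1 d (OO d j) * xg d ^ (2*j+1) = xg d * (yg d * xg d)^j := by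
  induction j with
  | zero => show f1 d 1 * xg d ^ 1 = xg d * 1; simp
  | succ j ih =>
    rw [OO_succ, map_mul, f1_aa _ (by omega), show 2*(j+1)+1 = (2*j+1)+2 by omega,
      mul_assoc, bG_shift, ← mul_assoc, ← mul_assoc, ih (by omega), pow_succ]
    rw [mul_assoc, mul_assoc]

theorem shuffle {G : Type*} [Group G] (x y : G) (j : ℕ) : x * (y*x)^j = (x*y)^j * x := by
  have hs : SemiconjBy x (y*x) (x*y) := by
    rw [SemiconjBy]
    group
  exact (hs.pow_right j).eq

theorem f1_wplus : f1 d (wplus d) = xg d * bG d (d+1) * (xg d)⁻¹ := by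
  rcases Nat.even_or_odd d with ⟨e, he⟩ | ⟨e, he⟩
  · have he' : d = 2*e := by omega
    subst he'
    have hA := f1_EE (2*e) (j := e+1) (by omega)
    have hB := f1_OO (2*e) (j := e+1) (by omega)
    have eqA : f1 (2*e) (EE (2*e) (e+1)) =
        (yg (2*e) * xg (2*e))^(e+1) * (xg (2*e) ^ (2*(e+1)))⁻¹ :=
      eq_mul_inv_of_mul_eq hA
    have eqB : f1 (2*e) (OO (2*e) (e+1)) =
        xg (2*e) * (yg (2*e) * xg (2*e))^(e+1) * (xg (2*e) ^ (2*(e+1)+1))⁻¹ :=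
      eq_mul_inv_of_mul_eq hB
    -- braid identity in the form needed
    have hb : xg (2*e) * (yg (2*e) * xg (2*e))^(e+1) =
        (yg (2*e) * xg (2*e))^(e+1) * yg (2*e) := by
      have h1' : (xg (2*e) * yg (2*e))^(e+1) * xg (2*e) =
          (yg (2*e) * xg (2*e))^(e+1) * yg (2*e) := by
        rw [← altProd_odd, ← altProd_odd, show 2*(e+1)+1 = 2*e+3 by omega]
        exact braidG (2*e)
      rw [shuffle (xg (2*e)) (yg (2*e)) (e+1)]
      exact h1'
    rw [wplus, if_pos ⟨e, by omega⟩, show kk (2*e) = e+1 by simp [kk]; omega,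
      map_mul, map_inv, eqA, eqB, hb, bG]
    group
  · subst he
    have hA := f1_EE (2*e+1) (j := e+1+1) (by omega)
    have hB := f1_OO (2*e+1) (j := e+1) (by omega)
    have eqA : f1 (2*e+1) (EE (2*e+1) (e+1+1)) =
        (yg (2*e+1) * xg (2*e+1))^(e+1+1) * (xg (2*e+1) ^ (2*(e+1+1)))⁻¹ :=
      eq_mul_inv_of_mul_eq hA
    have eqB : f1 (2*e+1) (OO (2*e+1) (e+1)) =
        xg (2*e+1) * (yg (2*e+1) * xg (2*e+1))^(e+1) * (xg (2*e+1) ^ (2*(e+1)+1))⁻¹ :=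
      eq_mul_inv_of_mul_eq hB
    have hb : (yg (2*e+1) * xg (2*e+1))^(e+1+1) =
        xg (2*e+1) * ((yg (2*e+1) * xg (2*e+1))^(e+1) * yg (2*e+1)) := by
      have h1' : (xg (2*e+1) * yg (2*e+1))^(e+1+1) =
          (yg (2*e+1) * xg (2*e+1))^(e+1+1) := by
        rw [← altProd_even, ← altProd_even, show 2*(e+1+1) = 2*e+1+3 by omega]
        exact braidG (2*e+1)
      rw [← mul_assoc, shuffle (xg (2*e+1)) (yg (2*e+1)) (e+1), mul_assoc, ← pow_succ]
      exact h1'.symm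
    rw [wplus, if_neg (not_even_odd e), show kk (2*e+1) = e+1+1 by simp [kk]; omega,
      show e+1+1-1 = e+1 by omega, map_mul, map_inv, eqA, eqB, hb, bG]
    group

theorem key1 (v : Ffr d) : f1 d (Th d v) = xg d * f1 d v * (xg d)⁻¹ := by
  have hcomp : (f1 d).comp (Th d : Ffr d →* Ffr d) =
      ((MulAut.conj (xg d)).toMonoidHom : Gd d →* Gd d).comp (f1 d) := by
    apply FreeGroup.ext_hom
    intro v
    simp only [MonoidHom.comp_apply, MulEquiv.coe_toMonoidHom, MulAut.conj_apply]
    rw [of_eq_aa]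
    rcases eq_or_ne (v : ℕ) (d+1) with hv | hv
    · rw [show ((Th d : Ffr d →* Ffr d) (aa d (v:ℕ))) = thp d (aa d (v:ℕ)) from rfl]
      rw [hv, thp_top, f1_wplus, f1_aa d (by omega)]
    · have hv2 : (v:ℕ) ≤ d := by have := v.2; omega
      rw [show ((Th d : Ffr d →* Ffr d) (aa d (v:ℕ))) = thp d (aa d (v:ℕ)) from rfl]
      rw [thp_aa d hv2, f1_aa d (by omega), f1_aa d (by omega), bG_succ]
  exact DFunLike.congr_fun hcomp v

theorem key1' (v : Ffr d) : f1 d ((Th d)⁻¹ v) = (xg d)⁻¹ * f1 d v * xg d := by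
  have h := key1 d ((Th d)⁻¹ v)
  have h2 : Th d ((Th d)⁻¹ v) = v := by
    simp [MulAut.inv_def]
  rw [h2] at h
  rw [h]
  group

theorem keyZ (t : ℤ) (v : Ffr d) :
    f1 d ((phiZ d (Multiplicative.ofAdd t)) v) = xg d ^ t * f1 d v * (xg d ^ t)⁻¹ := by
  induction t using Int.induction_on generalizing v with
  | zero => simp [phiZ_apply]
  | succ t ih =>
    have hsplit : (Multiplicative.ofAdd ((t:ℤ)+1)) =
        Multiplicative.ofAdd (t:ℤ) * Multiplicative.ofAdd 1 := by
      rw [← ofAdd_add]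
    rw [hsplit, map_mul, MulAut.mul_apply, ih, phiZ_apply, zpow_one, key1]
    group
  | pred t ih =>
    have hsplit : (Multiplicative.ofAdd (-(t:ℤ)-1)) =
        Multiplicative.ofAdd (-(t:ℤ)) * Multiplicative.ofAdd (-1) := by
      rw [← ofAdd_add]
      congr 1
    have hinv : phiZ d (Multiplicative.ofAdd (-1:ℤ)) = (Th d)⁻¹ := by
      rw [phiZ_apply, zpow_neg, zpow_one]
    rw [hsplit, map_mul, MulAut.mul_apply, hinv, ih, key1']
    group

theorem compat : ∀ g : Multiplicative ℤ,
    (f1 d).comp ((phiZ d g).toMonoidHom) =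
      (MulAut.conj ((zpowersHom (Gd d) (xg d)) g)).toMonoidHom.comp (f1 d) := by
  intro g
  apply MonoidHom.ext
  intro v
  simp only [MonoidHom.comp_apply, MulEquiv.coe_toMonoidHom, MulAut.conj_apply,
    zpowersHom_apply]
  have := keyZ d (Multiplicative.toAdd g) v
  rwa [ofAdd_toAdd] at this

def Phi : K d →* Gd d := SemidirectProduct.lift (f1 d) (zpowersHom _ (xg d)) (compat d)

theorem Phi_XX : Phi d (XX d) = xg d := by
  rw [XX, Phi, SemidirectProduct.lift_inr, zpowersHom_apply]
  simp

theorem Phi_YY : Phi d (YY d) = yg d := by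
  rw [YY, map_mul, Phi_XX]
  have h1 : Phi d (SemidirectProduct.inl (aa d 0)) = f1 d (aa d 0) :=
    SemidirectProduct.lift_inl _ _ _ _
  rw [h1, f1_aa d (by omega), bG]
  simp

theorem Phi_psi (u : Gd d) : Phi d (psi d u) = u := by
  have hcomp : (Phi d).comp (psi d) = MonoidHom.id (Gd d) := by
    apply PresentedGroup.ext
    intro i
    simp only [MonoidHom.comp_apply, MonoidHom.id_apply]
    fin_cases i
    · show Phi d (psi d (xg d)) = xg d
      rw [psi_x, Phi_XX]
    · show Phi d (psi d (yg d)) = yg d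
      rw [psi_y, Phi_YY]
  exact DFunLike.congr_fun hcomp u

end DAG
namespace DAG

variable (d : ℕ)

theorem central_eq_one (z : Gd d) (hz : ∀ u : Gd d, u * z = z * u)
    (h0 : (psi d z).right = 1) : z = 1 := by
  set f := (psi d z).left with hf
  have hpz : psi d z = ⟨f, 1⟩ := by
    ext
    · rfl
    · exact h0
  have hX : XX d * psi d z = psi d z * XX d := by
    rw [← psi_x, ← map_mul, ← map_mul, hz (xg d)]
  have hY : YY d * psi d z = psi d z * YY d := by
    rw [← psi_y, ← map_mul, ← map_mul, hz (yg d)]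
  have hTf : Th d f = f := by
    have h2 := congrArg SemidirectProduct.left hX
    simp only [SemidirectProduct.mul_left, XX_def, h0, map_one, MulAut.one_apply,
      one_mul, mul_one] at h2
    rw [phiZ_apply, zpow_one] at h2
    exact h2
  have hc0 : aa d 0 * f = f * aa d 0 := by
    have h3 := congrArg SemidirectProduct.left hY
    simp only [SemidirectProduct.mul_left, YY_def, h0, map_one, MulAut.one_apply,
      one_mul, mul_one] at h3
    rw [phiZ_apply, zpow_one, hTf] at h3
    exact h3
  have hTpow : ∀ i : ℕ, (Th d ^ i) f = f := by
    intro i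
    induction i with
    | zero => rfl
    | succ i ih => rw [pow_succ', MulAut.mul_apply, ih, hTf]
  have hcomm : ∀ v : Fin (d+2), Commute (FreeGroup.of v) f := by
    intro v
    rw [of_eq_aa]
    have hv : (Th d ^ (v:ℕ)) (aa d 0) = aa d (v:ℕ) := by
      rw [Th_pow_aa d (i := (v:ℕ)) (j := 0) (by have := v.2; omega), Nat.zero_add]
    show aa d (v:ℕ) * f = f * aa d (v:ℕ)
    rw [← hv, ← hTpow (v:ℕ), ← map_mul, ← map_mul, hc0]
  have hf1 : f = 1 := by
    refine freeGroup_center_eq_one (i₀ := (0 : Fin (d+2))) (j₀ := 1) ?_ f hcomm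
    intro hcon
    have := congrArg Fin.val hcon
    simp at this
  have hpz1 : psi d z = 1 := by
    rw [hpz, hf1]
    rfl
  have h2 := Phi_psi d z
  rw [hpz1, map_one] at h2
  exact h2.symm

end DAG


/-- For `m ≥ 3`, if `g ∈ G(m)` is not central and `z ≠ 1` is central,
then `g` and `gz` are not conjugate in `G(m)`. -/
theorem not_conj_central_translate (m : ℕ) (hm : 3 ≤ m) (g z : DihedralArtinGroup m)
    (hg : g ∉ Subgroup.center (DihedralArtinGroup m))
    (hz : z ∈ Subgroup.center (DihedralArtinGroup m)) (hz1 : z ≠ 1) :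
    ¬ IsConj g (g * z) := by
  obtain ⟨d, rfl⟩ : ∃ d, m = d + 3 := ⟨m - 3, by omega⟩
  rw [isConj_iff]
  rintro ⟨c, hc⟩
  have hzeq : z = g⁻¹ * (c * g * c⁻¹) := by
    rw [hc]
    group
  have hz0 : (DAG.psi d z).right = 1 := by
    have hR : ∀ u : DihedralArtinGroup (d+3), (DAG.psi d u).right
        = SemidirectProduct.rightHom (DAG.psi d u) := fun u => rfl
    rw [hR, hzeq, map_mul, map_mul, map_mul, map_inv, map_inv, map_mul, map_mul, map_inv]
    set a := SemidirectProduct.rightHom (DAG.psi d g)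
    set b := SemidirectProduct.rightHom (DAG.psi d c)
    show a⁻¹ * (b * a * b⁻¹) = 1
    rw [mul_comm b a, mul_inv_cancel_right, inv_mul_cancel]
  have := DAG.central_eq_one d z (fun u => Subgroup.mem_center_iff.1 hz u) hz0
  exact hz1 this
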